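/- The linear span of the union of all the subspaces W_k (k ∈ ℕ), V¹_{l,r} (l ∈ ℕ, r ≥ 1) and V²_{p,s} (p ∈ ℕ, s ≥ 1) is dense in A. In particular every spanning element S_μ (S_ν)⋆ lies in this linear span: if |μ| = |ν| it lies in Span(∪_k W_k); if |μ| > |ν| it lies in Span(∪ V¹_{k,r}); if |μ| < |ν| it lies in Span(∪ V²_{k,r}). -/

import Mathlib

open scoped ComplexOrder

noncomputable section

/-- The product `S_{μ₁} ⋯ S_{μ_p}` along a word `μ` (with `S_μ = 1` for the empty word). -/
def wordProd {A : Type*} [Monoid A] {n : ℕ} (S : Fin n → A) (μ : List (Fin n)) : A :=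
  (μ.map S).prod

/-- `B_{r,s} = Span { S_μ S_ν⋆ : |μ| = r, |ν| = s }`;  `F_k = B_{k,k}`. -/
def Bspan {A : Type*} [Ring A] [Algebra ℂ A] [StarRing A] {n : ℕ}
    (S : Fin n → A) (r s : ℕ) : Submodule ℂ A :=
  Submodule.span ℂ
    {a | ∃ μ ν : List (Fin n), μ.length = r ∧ ν.length = s ∧
        a = wordProd S μ * star (wordProd S ν)}

/-- `W_0 = ℂ·1` and, for `k ≥ 1`,
`W_k = {x ∈ F_k : φ(y⋆ x) = 0 for all y ∈ F_{k-1}}`. -/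
def Wsub {A : Type*} [NormedRing A] [NormedAlgebra ℂ A] [StarRing A] {n : ℕ}
    (φ : A →L[ℂ] ℂ) (S : Fin n → A) : ℕ → Submodule ℂ A
  | 0 => Submodule.span ℂ {(1 : A)}
  | (k + 1) =>
      Bspan S (k + 1) (k + 1) ⊓
        ⨅ y ∈ Bspan S k k,
          LinearMap.ker ((φ : A →ₗ[ℂ] ℂ) ∘ₗ LinearMap.mulLeft ℂ (star y))

/-- `V¹_{k,r} = Span { S_μ x : |μ| = r, x ∈ W_k }`. -/
def V1 {A : Type*} [NormedRing A] [NormedAlgebra ℂ A] [StarRing A] {n : ℕ}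
    (φ : A →L[ℂ] ℂ) (S : Fin n → A) (k r : ℕ) : Submodule ℂ A :=
  Submodule.span ℂ
    {a | ∃ μ : List (Fin n), ∃ x : A, μ.length = r ∧ x ∈ Wsub φ S k ∧
        a = wordProd S μ * x}

/-- `V²_{k,r} = Span { x S_γ⋆ : |γ| = r, x ∈ W_k }`. -/
def V2 {A : Type*} [NormedRing A] [NormedAlgebra ℂ A] [StarRing A] {n : ℕ}
    (φ : A →L[ℂ] ℂ) (S : Fin n → A) (k r : ℕ) : Submodule ℂ A :=
  Submodule.span ℂ
    {a | ∃ γ : List (Fin n), ∃ x : A, γ.length = r ∧ x ∈ Wsub φ S k ∧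
        a = x * star (wordProd S γ)}

section lemmas
variable {A : Type*} [NormedRing A] [StarRing A] [CStarRing A]
    [NormedAlgebra ℂ A] [StarModule ℂ A] [CompleteSpace A]
    {n : ℕ} (S : Fin n → A)

lemma wordProd_nil : wordProd S ([] : List (Fin n)) = 1 := rfl
lemma wordProd_cons (a : Fin n) (μ : List (Fin n)) :
    wordProd S (a :: μ) = S a * wordProd S μ := by simp [wordProd]
lemma wordProd_append (μ ν : List (Fin n)) :
    wordProd S (μ ++ ν) = wordProd S μ * wordProd S ν := by simp [wordProd]

lemma cuntz_orth (hS1 : ∀ i, star (S i) * S i = 1)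
    (hS2 : ∑ j, S j * star (S j) = 1) {i j : Fin n} (hij : i ≠ j) :
    star (S i) * S j = 0 := by
  letI : CStarAlgebra A := {}
  letI := CStarAlgebra.spectralOrder A
  haveI := CStarAlgebra.spectralOrderedRing A
  set p : Fin n → A := fun i => S i * star (S i) with hp
  have hpp : ∀ i, p i * p i = p i := by
    intro i
    calc p i * p i = S i * (star (S i) * S i) * star (S i) := by simp [hp, mul_assoc]
    _ = p i := by rw [hS1, mul_one]
  have hterm : ∀ a b : Fin n, p a * p b * p a = star (p b * p a) * (p b * p a) := by
    intro a b
    have hsa : ∀ c, star (p c) = p c := by intro c; simp [hp, star_mul]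
    rw [star_mul, hsa, hsa]
    calc p a * p b * p a = p a * (p b * p b) * p a := by rw [hpp]
    _ = p a * p b * (p b * p a) := by noncomm_ring
  have hsum' : ∀ a : Fin n, ∑ j ∈ Finset.univ.erase a, p a * p j * p a = 0 := by
    intro i
    have h1 : ∑ j, p i * p j * p i = p i := by
      rw [← Finset.sum_mul, ← Finset.mul_sum, hS2, mul_one, hpp]
    have h2 := Finset.add_sum_erase Finset.univ (fun j => p i * p j * p i)
      (Finset.mem_univ i)
    rw [h1] at h2
    have : p i * p i * p i = p i := by rw [hpp, hpp]
    rw [this] at h2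
    exact add_eq_left.mp h2
  have hpij : ∀ a b : Fin n, a ≠ b → p b * p a = 0 := by
    intro a b hab
    have hmem : b ∈ Finset.univ.erase a := Finset.mem_erase.mpr ⟨hab.symm, Finset.mem_univ b⟩
    have hnn : ∀ c ∈ Finset.univ.erase a, (0:A) ≤ p a * p c * p a := by
      intro c _
      rw [hterm]
      exact star_mul_self_nonneg _
    have hle : p a * p b * p a ≤ ∑ j ∈ Finset.univ.erase a, p a * p j * p a :=
      Finset.single_le_sum hnn hmem
    rw [hsum'] at hle
    have h0 : p a * p b * p a = 0 := le_antisymm hle (hnn b hmem)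
    rw [hterm] at h0
    exact (CStarRing.star_mul_self_eq_zero_iff _).mp h0
  have hpij' : p i * p j = 0 := hpij j i hij.symm
  have h1 : star (S i) * p i = star (S i) := by
    simp only [hp]; rw [← mul_assoc, hS1, one_mul]
  have h2 : p j * S j = S j := by
    simp only [hp]; rw [mul_assoc, hS1, mul_one]
  calc star (S i) * S j = (star (S i) * p i) * (p j * S j) := by rw [h1, h2]
  _ = star (S i) * (p i * p j) * S j := by noncomm_ring
  _ = 0 := by rw [hpij', mul_zero, zero_mul]

lemma star_wp_mul (hS1 : ∀ i, star (S i) * S i = 1)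
    (hS2 : ∑ j, S j * star (S j) = 1) :
    ∀ (α μ : List (Fin n)), α.length ≤ μ.length →
    star (wordProd S α) * wordProd S μ =
      if μ.take α.length = α then wordProd S (μ.drop α.length) else 0 := by
  intro α
  induction α with
  | nil => intro μ _; simp [wordProd_nil]
  | cons a α ih =>
    intro μ hlen
    cases μ with
    | nil => simp at hlen
    | cons m μ =>
      have h' : α.length ≤ μ.length := Nat.succ_le_succ_iff.mp hlen
      rw [wordProd_cons, wordProd_cons, star_mul]
      by_cases hm : a = m
      · subst hm
        have : star (wordProd S α) * star (S a) * (S a * wordProd S μ)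
            = star (wordProd S α) * wordProd S μ := by
          rw [mul_assoc, ← mul_assoc (star (S a)), hS1, one_mul]
        rw [this, ih μ h']
        simp [List.take_succ_cons, List.drop_succ_cons]
      · have : star (wordProd S α) * star (S a) * (S m * wordProd S μ) = 0 := by
          rw [mul_assoc, ← mul_assoc (star (S a)), cuntz_orth S hS1 hS2 hm,
            zero_mul, mul_zero]
        have hne : ¬ ((m :: μ).take (a :: α).length = a :: α) := by
          simp only [List.length_cons, List.take_succ_cons]
          intro hc
          injection hc with h1 _
          exact hm h1.symm
        rw [this, if_neg hne]

end lemmas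

section main
variable {A : Type*} [NormedRing A] [StarRing A] [CStarRing A]
    [NormedAlgebra ℂ A] [StarModule ℂ A] [CompleteSpace A]
    {n : ℕ} (S : Fin n → A) (φ : A →L[ℂ] ℂ)

lemma phi_val (hS1 : ∀ i, star (S i) * S i = 1)
    (hS2 : ∑ j, S j * star (S j) = 1)
    (hφ : ∀ μ ν : List (Fin n),
      φ (wordProd S μ * star (wordProd S ν)) =
        if μ = ν then ((n : ℂ) ^ μ.length)⁻¹ else 0)
    (α β μ ν : List (Fin n)) (hab : α.length = β.length)
    (hmn : μ.length = ν.length) (hle : α.length ≤ μ.length) :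
    φ (star (wordProd S α * star (wordProd S β)) * (wordProd S μ * star (wordProd S ν)))
      = if μ.take α.length = α ∧ β ++ μ.drop α.length = ν
        then ((n : ℂ) ^ ν.length)⁻¹ else 0 := by
  have e1 : star (wordProd S α * star (wordProd S β)) * (wordProd S μ * star (wordProd S ν))
      = wordProd S β * (star (wordProd S α) * wordProd S μ) * star (wordProd S ν) := by
    rw [star_mul, star_star]; noncomm_ring
  rw [e1, star_wp_mul S hS1 hS2 α μ hle]
  by_cases hc : μ.take α.length = α
  · rw [if_pos hc, ← wordProd_append]
    rw [hφ]
    by_cases hc2 : β ++ μ.drop α.length = ν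
    · rw [if_pos hc2, if_pos ⟨hc, hc2⟩, hc2]
    · rw [if_neg hc2, if_neg (fun h => hc2 h.2)]
  · rw [if_neg hc, mul_zero, zero_mul, map_zero,
      if_neg (fun h => hc h.1)]

lemma Bspan_le_succ (hS2 : ∑ j, S j * star (S j) = 1) (k : ℕ) :
    Bspan S k k ≤ Bspan S (k+1) (k+1) := by
  rw [Bspan, Submodule.span_le]
  rintro a ⟨μ, ν, hμ, hν, rfl⟩
  have : wordProd S μ * star (wordProd S ν)
      = ∑ j, wordProd S (μ ++ [j]) * star (wordProd S (ν ++ [j])) := by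
    have : ∀ j, wordProd S (μ ++ [j]) * star (wordProd S (ν ++ [j]))
        = wordProd S μ * (S j * star (S j)) * star (wordProd S ν) := by
      intro j
      rw [wordProd_append, wordProd_append, star_mul]
      simp only [wordProd_cons, wordProd_nil, mul_one, star_mul]
      noncomm_ring
    rw [Finset.sum_congr rfl (fun j _ => this j), ← Finset.sum_mul, ← Finset.mul_sum, hS2,
      mul_one]
  rw [this]
  exact Submodule.sum_mem _ (fun j _ => Submodule.subset_span
    ⟨μ ++ [j], ν ++ [j], by simp [hμ], by simp [hν], rfl⟩)

lemma mainA (hS1 : ∀ i, star (S i) * S i = 1)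
    (hS2 : ∑ j, S j * star (S j) = 1)
    (hφ : ∀ μ ν : List (Fin n),
      φ (wordProd S μ * star (wordProd S ν)) =
        if μ = ν then ((n : ℂ) ^ μ.length)⁻¹ else 0) :
    ∀ (k : ℕ) (μ ν : List (Fin n)), μ.length = k → ν.length = k →
    wordProd S μ * star (wordProd S ν) ∈
      Submodule.span ℂ (⋃ k : ℕ, (Wsub φ S k : Set A)) := by
  intro k
  induction k with
  | zero =>
    intro μ ν hμ hν
    rw [List.length_eq_zero_iff] at hμ hν
    subst hμ; subst hν
    have h1 : (1 : A) ∈ Wsub φ S 0 := Submodule.mem_span_singleton_self 1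
    refine Submodule.subset_span ?_
    have : wordProd S ([] : List (Fin n)) * star (wordProd S ([] : List (Fin n))) = 1 := by
      simp [wordProd_nil]
    rw [this]
    exact Set.mem_iUnion.mpr ⟨0, h1⟩
  | succ k ih =>
    intro μ ν hμ hν
    set e := wordProd S μ * star (wordProd S ν) with he
    set t : A := if μ.drop k = ν.drop k then
        ((n:ℂ))⁻¹ • (wordProd S (μ.take k) * star (wordProd S (ν.take k))) else 0 with ht
    have hμt : (μ.take k).length = k := by rw [List.length_take, hμ]; omega
    have hνt : (ν.take k).length = k := by rw [List.length_take, hν]; omega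
    have htW : t ∈ Submodule.span ℂ (⋃ k : ℕ, (Wsub φ S k : Set A)) := by
      rw [ht]; split
      · exact Submodule.smul_mem _ _ (ih (μ.take k) (ν.take k) hμt hνt)
      · exact Submodule.zero_mem _
    have hwB : e - t ∈ Bspan S (k+1) (k+1) := by
      have heB : e ∈ Bspan S (k+1) (k+1) := Submodule.subset_span ⟨μ, ν, hμ, hν, he⟩
      have htB : t ∈ Bspan S (k+1) (k+1) := by
        rw [ht]; split
        · exact Submodule.smul_mem _ _ (Bspan_le_succ S hS2 k
            (Submodule.subset_span ⟨μ.take k, ν.take k, hμt, hνt, rfl⟩))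
        · exact Submodule.zero_mem _
      exact Submodule.sub_mem _ heB htB
    have hker : ∀ y, y ∈ Bspan S k k → φ (star y * (e - t)) = 0 := by
      intro y hy
      rw [Bspan] at hy
      induction hy using Submodule.span_induction with
      | zero => simp
      | add x y hx hy hpx hpy => rw [star_add, add_mul, map_add, hpx, hpy, add_zero]
      | smul c x hx hpx => rw [star_smul, smul_mul_assoc, map_smul, hpx, smul_zero]
      | mem x hx =>
        obtain ⟨α, β, hα, hβ, rfl⟩ := hx
        rw [mul_sub, map_sub]
        have h1 : φ (star (wordProd S α * star (wordProd S β)) * e)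
            = if μ.take k = α ∧ β ++ μ.drop k = ν then ((n : ℂ) ^ (k+1))⁻¹ else 0 := by
          rw [he, phi_val S φ hS1 hS2 hφ α β μ ν (hα.trans hβ.symm) (hμ.trans hν.symm)
            (by omega), hα, hν]
        by_cases hd : μ.drop k = ν.drop k
        · have h2 : φ (star (wordProd S α * star (wordProd S β)) * t)
              = (n : ℂ)⁻¹ * (if μ.take k = α ∧ β = ν.take k then ((n : ℂ) ^ k)⁻¹ else 0) := by
            rw [ht, if_pos hd, mul_smul_comm, map_smul, smul_eq_mul]
            congr 1
            rw [phi_val S φ hS1 hS2 hφ α β (μ.take k) (ν.take k) (hα.trans hβ.symm)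
              (hμt.trans hνt.symm) (by omega), hα, hνt]
            have hd1 : (μ.take k).take k = μ.take k := by
              rw [List.take_take, min_self]
            have hd2 : (μ.take k).drop k = [] := by
              apply List.drop_eq_nil_of_le; omega
            rw [hd1, hd2, List.append_nil]
          rw [h1, h2]
          have hiff : (μ.take k = α ∧ β ++ μ.drop k = ν) ↔ (μ.take k = α ∧ β = ν.take k) := by
            constructor
            · rintro ⟨ha, hb⟩
              refine ⟨ha, ?_⟩
              rw [← hb, List.take_left' hβ]
            · rintro ⟨ha, hb⟩
              refine ⟨ha, ?_⟩
              rw [hb, hd, List.take_append_drop]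
          by_cases hC : μ.take k = α ∧ β = ν.take k
          · rw [if_pos hC, if_pos (hiff.mpr hC), pow_succ, mul_inv]
            ring
          · rw [if_neg hC, if_neg (fun h => hC (hiff.mp h)), mul_zero, sub_zero]
        · have h2 : φ (star (wordProd S α * star (wordProd S β)) * t) = 0 := by
            rw [ht, if_neg hd, mul_zero, map_zero]
          rw [h1, h2, sub_zero, if_neg]
          rintro ⟨-, hb⟩
          exact hd (by rw [← hb, List.drop_left' hβ])
    have hwW : e - t ∈ Wsub φ S (k+1) := by
      rw [Wsub]
      refine Submodule.mem_inf.mpr ⟨hwB, ?_⟩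
      rw [Submodule.mem_iInf]
      intro y
      rw [Submodule.mem_iInf]
      intro hy
      rw [LinearMap.mem_ker, LinearMap.comp_apply, LinearMap.mulLeft_apply,
        ContinuousLinearMap.coe_coe]
      exact hker y hy
    have hsplit : e = (e - t) + t := by abel
    rw [hsplit]
    exact Submodule.add_mem _
      (Submodule.subset_span (Set.mem_iUnion.mpr ⟨k+1, hwW⟩)) htW

end main

/-- The linear span of the union of all the `W_k` (`k ∈ ℕ`),
`V¹_{l,r}` (`l ∈ ℕ`, `r ≥ 1`) and `V²_{p,s}` (`p ∈ ℕ`, `s ≥ 1`) is dense in `A`.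
In particular every spanning element `S_μ S_ν⋆` lies in this linear span:
if `|μ| = |ν|` it lies in `Span(∪_k W_k)`, if `|μ| > |ν|` in `Span(∪ V¹_{k,r})`,
and if `|μ| < |ν|` in `Span(∪ V²_{k,r})`. -/
theorem filtration_span_dense
    {A : Type*} [NormedRing A] [StarRing A] [CStarRing A]
    [NormedAlgebra ℂ A] [StarModule ℂ A] [CompleteSpace A]
    {n : ℕ} (hn : 2 ≤ n) (S : Fin n → A)
    (hS1 : ∀ i, star (S i) * S i = 1)
    (hS2 : ∑ j, S j * star (S j) = 1)
    (hdense :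
      (Submodule.span ℂ
        {a | ∃ μ ν : List (Fin n),
            a = wordProd S μ * star (wordProd S ν)}).topologicalClosure = ⊤)
    (φ : A →L[ℂ] ℂ)
    (hφ : ∀ μ ν : List (Fin n),
      φ (wordProd S μ * star (wordProd S ν)) =
        if μ = ν then ((n : ℂ) ^ μ.length)⁻¹ else 0) :
    (Submodule.span ℂ
        ((⋃ k : ℕ, (Wsub φ S k : Set A)) ∪
          (⋃ l : ℕ, ⋃ r : ℕ, ⋃ _ : 1 ≤ r, (V1 φ S l r : Set A)) ∪
          (⋃ p : ℕ, ⋃ s : ℕ, ⋃ _ : 1 ≤ s, (V2 φ S p s : Set A)))).topologicalClosure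
      = ⊤ ∧
    (∀ μ ν : List (Fin n),
      (μ.length = ν.length →
        wordProd S μ * star (wordProd S ν) ∈
          Submodule.span ℂ (⋃ k : ℕ, (Wsub φ S k : Set A))) ∧
      (ν.length < μ.length →
        wordProd S μ * star (wordProd S ν) ∈
          Submodule.span ℂ
            (⋃ l : ℕ, ⋃ r : ℕ, ⋃ _ : 1 ≤ r, (V1 φ S l r : Set A))) ∧
      (μ.length < ν.length →
        wordProd S μ * star (wordProd S ν) ∈
          Submodule.span ℂ
            (⋃ p : ℕ, ⋃ s : ℕ, ⋃ _ : 1 ≤ s, (V2 φ S p s : Set A)))) := by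
  classical
  have part2 : ∀ μ ν : List (Fin n),
      (μ.length = ν.length →
        wordProd S μ * star (wordProd S ν) ∈
          Submodule.span ℂ (⋃ k : ℕ, (Wsub φ S k : Set A))) ∧
      (ν.length < μ.length →
        wordProd S μ * star (wordProd S ν) ∈
          Submodule.span ℂ
            (⋃ l : ℕ, ⋃ r : ℕ, ⋃ _ : 1 ≤ r, (V1 φ S l r : Set A))) ∧
      (μ.length < ν.length →
        wordProd S μ * star (wordProd S ν) ∈
          Submodule.span ℂ
            (⋃ p : ℕ, ⋃ s : ℕ, ⋃ _ : 1 ≤ s, (V2 φ S p s : Set A))) := by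
    intro μ ν
    refine ⟨?_, ?_, ?_⟩
    · intro hlen
      exact mainA S φ hS1 hS2 hφ ν.length μ ν hlen rfl
    · intro hlt
      set d := μ.length - ν.length with hd
      have hd1 : 1 ≤ d := by omega
      have hlen2 : (μ.drop d).length = ν.length := by rw [List.length_drop]; omega
      have hlen3 : (μ.take d).length = d := by rw [List.length_take]; omega
      have hx : wordProd S (μ.drop d) * star (wordProd S ν) ∈
          Submodule.span ℂ (⋃ k : ℕ, (Wsub φ S k : Set A)) :=
        mainA S φ hS1 hS2 hφ ν.length _ ν hlen2 rfl
      have hrw : wordProd S μ * star (wordProd S ν)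
          = wordProd S (μ.take d) * (wordProd S (μ.drop d) * star (wordProd S ν)) := by
        conv_lhs => rw [← List.take_append_drop d μ]
        rw [wordProd_append, mul_assoc]
      have key : ∀ x ∈ Submodule.span ℂ (⋃ k : ℕ, (Wsub φ S k : Set A)),
          wordProd S (μ.take d) * x ∈ Submodule.span ℂ
            (⋃ l : ℕ, ⋃ r : ℕ, ⋃ _ : 1 ≤ r, (V1 φ S l r : Set A)) := by
        intro x hx
        induction hx using Submodule.span_induction with
        | mem x hxx =>
          obtain ⟨kk, hk⟩ := Set.mem_iUnion.mp hxx
          have h1 : wordProd S (μ.take d) * x ∈ V1 φ S kk d :=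
            Submodule.subset_span ⟨μ.take d, x, hlen3, hk, rfl⟩
          exact Submodule.subset_span (Set.mem_iUnion.mpr ⟨kk,
            Set.mem_iUnion.mpr ⟨d, Set.mem_iUnion.mpr ⟨hd1, h1⟩⟩⟩)
        | zero => rw [mul_zero]; exact Submodule.zero_mem _
        | add a b ha hb hpa hpb => rw [mul_add]; exact Submodule.add_mem _ hpa hpb
        | smul c a ha hpa => rw [mul_smul_comm]; exact Submodule.smul_mem _ _ hpa
      rw [hrw]
      exact key _ hx
    · intro hlt
      set d := ν.length - μ.length with hd
      have hd1 : 1 ≤ d := by omega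
      have hlen2 : (ν.drop d).length = μ.length := by rw [List.length_drop]; omega
      have hlen3 : (ν.take d).length = d := by rw [List.length_take]; omega
      have hx : wordProd S μ * star (wordProd S (ν.drop d)) ∈
          Submodule.span ℂ (⋃ k : ℕ, (Wsub φ S k : Set A)) :=
        mainA S φ hS1 hS2 hφ μ.length μ _ rfl hlen2
      have hrw : wordProd S μ * star (wordProd S ν)
          = (wordProd S μ * star (wordProd S (ν.drop d))) * star (wordProd S (ν.take d)) := by
        conv_lhs => rw [← List.take_append_drop d ν]
        rw [wordProd_append, star_mul, mul_assoc]
      have key : ∀ x ∈ Submodule.span ℂ (⋃ k : ℕ, (Wsub φ S k : Set A)),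
          x * star (wordProd S (ν.take d)) ∈ Submodule.span ℂ
            (⋃ p : ℕ, ⋃ s : ℕ, ⋃ _ : 1 ≤ s, (V2 φ S p s : Set A)) := by
        intro x hx
        induction hx using Submodule.span_induction with
        | mem x hxx =>
          obtain ⟨kk, hk⟩ := Set.mem_iUnion.mp hxx
          have h1 : x * star (wordProd S (ν.take d)) ∈ V2 φ S kk d :=
            Submodule.subset_span ⟨ν.take d, x, hlen3, hk, rfl⟩
          exact Submodule.subset_span (Set.mem_iUnion.mpr ⟨kk,
            Set.mem_iUnion.mpr ⟨d, Set.mem_iUnion.mpr ⟨hd1, h1⟩⟩⟩)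
        | zero => rw [zero_mul]; exact Submodule.zero_mem _
        | add a b ha hb hpa hpb => rw [add_mul]; exact Submodule.add_mem _ hpa hpb
        | smul c a ha hpa => rw [smul_mul_assoc]; exact Submodule.smul_mem _ _ hpa
      rw [hrw]
      exact key _ hx
  refine ⟨?_, part2⟩
  rw [← top_le_iff, ← hdense]
  apply Submodule.topologicalClosure_mono
  rw [Submodule.span_le]
  rintro a ⟨μ, ν, rfl⟩
  rw [SetLike.mem_coe]
  rcases lt_trichotomy μ.length ν.length with h | h | h
  · exact Submodule.span_mono Set.subset_union_right ((part2 μ ν).2.2 h)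
  · exact Submodule.span_mono
      (Set.subset_union_of_subset_left Set.subset_union_left _) ((part2 μ ν).1 h)
  · exact Submodule.span_mono
      (Set.subset_union_of_subset_left Set.subset_union_right _) ((part2 μ ν).2.1 h)
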